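/- If a classical reduction R = (G_ext, T, G_int) is β-(Â,B̂)-respectful (i.e., it is (β,Â)-extendable and (Â,B̂)-closed), then there exists an (Â,B̂)-consistent reduction R̂ = (G_ext, T̂, G_int) that is (β,Â)-effective: for every quantum adversary Â ∈ Â, the transformed adversary T̂(Â) lies in B̂ and ν_{G_ext}(T̂(Â)) ≥ β(ν_{G_int}(Â)). -/
import Mathlib


/-- The set of `(G,C)`-realizable machines: those with the same game value as some member of `C`. -/
def Realizable {Mach : Type*} (ν : Mach → ℝ) (C : Set Mach) : Set Mach :=
  {M | ∃ N ∈ C, ν M = ν N}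

/-- Quantum lifting for game-preserving reductions: a `β`-(Â,B̂)-respectful classical
reduction lifts to an (Â,B̂)-consistent, (β,Â)-effective quantum reduction. -/
theorem lifting_game_preserving
    {Mach : Type*} (νext νint : Mach → ℝ) (T : Mach → Mach)
    (ClassicalM Ahat Bhat : Set Mach) (β : ℝ → ℝ)
    -- every quantum adversary in Â is G_int-equivalent to some classical machine
    (hrealize : ∀ a ∈ Ahat, ∃ A ∈ ClassicalM, νint A = νint a)
    -- (β,Â)-extendable: effectiveness on classical machines realizable w.r.t. Â
    (hext : ∀ A ∈ ClassicalM ∩ Realizable νint Ahat, νext (T A) ≥ β (νint A))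
    -- (Â,B̂)-closed
    (hclosed : ∀ A ∈ ClassicalM ∩ Realizable νint Ahat, T A ∈ Realizable νext Bhat) :
    ∃ That : Mach → Mach, ∀ a ∈ Ahat, That a ∈ Bhat ∧ νext (That a) ≥ β (νint a) := by
  classical
  have key : ∀ a, a ∈ Ahat → ∃ b, b ∈ Bhat ∧ νext b ≥ β (νint a) := by
    intro a ha
    obtain ⟨A, hA, hAa⟩ := hrealize a ha
    have hmem : A ∈ ClassicalM ∩ Realizable νint Ahat := ⟨hA, a, ha, hAa⟩
    obtain ⟨B, hB, hTB⟩ := hclosed A hmem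
    exact ⟨B, hB, by rw [← hTB, ← hAa]; exact hext A hmem⟩
  refine ⟨fun a => if h : a ∈ Ahat then (key a h).choose else a, fun a ha => ?_⟩
  simp only [dif_pos ha]
  exact (key a ha).choose_spec
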